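/- arXiv:2210.11054 — 5 statements merged into one kernel-verified Lean document; each statement's English description precedes it below -/
import Mathlib

section
/- Let L_BC = −∑_{(u,i)∈O⁺} log[ exp(cos(θ_ui + M_ui)/τ) / (exp(cos(θ_ui + M_ui)/τ) + ∑_{j∈N_u} exp(cos θ_uj/τ)) ] be the BC loss. Suppose m ∈ ℝ satisfies cos(θ_ui + M_ui) ≤ ⟨v_u, v_i⟩ − m for every (u,i) ∈ O⁺. Then L_BC ≥ ∑_{(u,i)∈O⁺} [ ‖v_u − v_i‖²/(2τ) + m/τ + log|N_u| − (1/(2τ|N_u|)) ∑_{j∈N_u} ‖v_u − v_j‖² ]; that is, the BC loss is bounded below by a compactness term (sum of squared distances of positive user–item pairs) minus a dispersion term (average squared distances from each user to its negative items), up to explicit constants. -/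
open Real BigOperators

lemma jensen_exp_aux {ι : Type*} (s : Finset ι) (hs : s.Nonempty) (x : ι → ℝ) :
    Real.log s.card + (∑ j ∈ s, x j) / s.card ≤ Real.log (∑ j ∈ s, Real.exp (x j)) := by
  have hn : (0:ℝ) < s.card := by exact_mod_cast Finset.card_pos.mpr hs
  have hJ := convexOn_exp.map_sum_le (t := s) (w := fun _ => (s.card : ℝ)⁻¹)
    (p := x) (fun i _ => by positivity)
    (by simp [Finset.sum_const, mul_inv_cancel₀ hn.ne']) (fun i _ => Set.mem_univ _)
  simp only [smul_eq_mul, Function.comp] at hJ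
  have h1 : Real.exp ((∑ j ∈ s, x j) / s.card) ≤ (∑ j ∈ s, Real.exp (x j)) / s.card := by
    calc Real.exp ((∑ j ∈ s, x j) / s.card)
        = Real.exp (∑ j ∈ s, (s.card : ℝ)⁻¹ * x j) := by
          rw [← Finset.mul_sum, div_eq_inv_mul]
      _ ≤ ∑ j ∈ s, (s.card : ℝ)⁻¹ * Real.exp (x j) := hJ
      _ = (∑ j ∈ s, Real.exp (x j)) / s.card := by
          rw [← Finset.mul_sum, div_eq_inv_mul]
  have hpos : 0 < ∑ j ∈ s, Real.exp (x j) :=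
    Finset.sum_pos (fun j _ => Real.exp_pos _) hs
  have h2 : Real.log (Real.exp ((∑ j ∈ s, x j) / s.card)) ≤
      Real.log ((∑ j ∈ s, Real.exp (x j)) / s.card) :=
    Real.log_le_log (Real.exp_pos _) h1
  rw [Real.log_exp, Real.log_div hpos.ne' hn.ne'] at h2
  linarith

/-- The BC loss is bounded below by a compactness term (sum of squared
distances of positive user–item pairs) minus a dispersion term (average squared
distances from each user to its negative items), up to explicit constants. -/
theorem bc_loss_lower_bound
    {U I : Type*} (d : ℕ)
    (vU : U → EuclideanSpace ℝ (Fin d)) (vI : I → EuclideanSpace ℝ (Fin d))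
    (hU : ∀ u, ‖vU u‖ = 1) (hI : ∀ i, ‖vI i‖ = 1)
    (Opos : Finset (U × I)) (hO : Opos.Nonempty)
    (N : U → Finset I) (hN : ∀ p ∈ Opos, (N p.1).Nonempty)
    (τ : ℝ) (hτ : 0 < τ)
    (M : U → I → ℝ) (hM : ∀ p ∈ Opos, 0 ≤ M p.1 p.2)
    (θ : U → I → ℝ)
    (hθ : ∀ u i, θ u i = Real.arccos ((inner ℝ (vU u) (vI i) : ℝ)))
    (m : ℝ)
    (hm : ∀ p ∈ Opos,
      Real.cos (θ p.1 p.2 + M p.1 p.2) ≤ (inner ℝ (vU p.1) (vI p.2) : ℝ) - m)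
    (LBC : ℝ)
    (hLBC : LBC = -∑ p ∈ Opos, Real.log
      (Real.exp (Real.cos (θ p.1 p.2 + M p.1 p.2) / τ) /
        (Real.exp (Real.cos (θ p.1 p.2 + M p.1 p.2) / τ) +
          ∑ j ∈ N p.1, Real.exp (Real.cos (θ p.1 j) / τ)))) :
    LBC ≥ ∑ p ∈ Opos,
      (‖vU p.1 - vI p.2‖ ^ 2 / (2 * τ) + m / τ + Real.log ((N p.1).card) -
        (1 / (2 * τ * (N p.1).card)) * ∑ j ∈ N p.1, ‖vU p.1 - vI j‖ ^ 2) := by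
  -- key fact: cos (θ u j) = inner = 1 - ‖vU u - vI j‖^2/2
  have hcos : ∀ u i, Real.cos (θ u i) = 1 - ‖vU u - vI i‖ ^ 2 / 2 := by
    intro u i
    have hCS : |(inner ℝ (vU u) (vI i) : ℝ)| ≤ 1 := by
      have := abs_real_inner_le_norm (vU u) (vI i)
      rwa [hU, hI, one_mul] at this
    rw [hθ, Real.cos_arccos (by linarith [abs_le.mp hCS |>.1]) (abs_le.mp hCS |>.2)]
    have hns : ‖vU u - vI i‖ ^ 2 = ‖vU u‖ ^ 2 - 2 * (inner ℝ (vU u) (vI i) : ℝ) + ‖vI i‖ ^ 2 :=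
      norm_sub_sq_real _ _
    rw [hU, hI] at hns
    linarith
  rw [hLBC, ← Finset.sum_neg_distrib]
  apply Finset.sum_le_sum
  intro p hp
  obtain ⟨u, i⟩ := p
  set a := Real.cos (θ u i + M u i) / τ with ha
  set S := ∑ j ∈ N u, Real.exp (Real.cos (θ u j) / τ) with hS
  have hSpos : 0 < S := Finset.sum_pos (fun j _ => Real.exp_pos _) (hN (u, i) hp)
  have hnpos : (0:ℝ) < (N u).card := by
    exact_mod_cast Finset.card_pos.mpr (hN (u, i) hp)
  -- rewrite the -log term
  have hterm : -Real.log (Real.exp a / (Real.exp a + S)) = Real.log (Real.exp a + S) - a := by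
    rw [Real.log_div (Real.exp_pos a).ne' (by positivity), Real.log_exp]
    ring
  have h1 : Real.log S ≤ Real.log (Real.exp a + S) :=
    Real.log_le_log hSpos (by linarith [Real.exp_pos a])
  -- Jensen bound on log S
  have h2 : Real.log ((N u).card) + (∑ j ∈ N u, Real.cos (θ u j) / τ) / (N u).card
      ≤ Real.log S := jensen_exp_aux (N u) (hN (u, i) hp) _
  -- bound on -a
  have h3 : (m - (1 - ‖vU u - vI i‖ ^ 2 / 2)) / τ ≤ -a := by
    have hinner : (inner ℝ (vU u) (vI i) : ℝ) = 1 - ‖vU u - vI i‖ ^ 2 / 2 := by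
      have := hcos u i
      rw [hθ] at this
      have hCS : |(inner ℝ (vU u) (vI i) : ℝ)| ≤ 1 := by
        have := abs_real_inner_le_norm (vU u) (vI i)
        rwa [hU, hI, one_mul] at this
      rw [Real.cos_arccos (by linarith [abs_le.mp hCS |>.1]) (abs_le.mp hCS |>.2)] at this
      exact this
    have hm' := hm (u, i) hp
    rw [hinner] at hm'
    simp only at hm'
    rw [ha, ← neg_div]
    gcongr
    linarith
  -- rewrite the sum of cosines
  have hτne : τ ≠ 0 := hτ.ne'
  have hne : ((N u).card : ℝ) ≠ 0 := hnpos.ne'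
  have hsumcos : (∑ j ∈ N u, Real.cos (θ u j) / τ) / (N u).card
      = 1 / τ - (1 / (2 * τ * (N u).card)) * ∑ j ∈ N u, ‖vU u - vI j‖ ^ 2 := by
    have hrw : ∑ j ∈ N u, Real.cos (θ u j) / τ
        = ∑ j ∈ N u, (1 / τ - ‖vU u - vI j‖ ^ 2 / (2 * τ)) :=
      Finset.sum_congr rfl (fun j _ => by rw [hcos u j]; ring)
    have hT : ∑ j ∈ N u, ‖vU u - vI j‖ ^ 2 / (2 * τ)
        = (1 / (2 * τ)) * ∑ j ∈ N u, ‖vU u - vI j‖ ^ 2 := by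
      rw [Finset.mul_sum]; exact Finset.sum_congr rfl (fun j _ => by ring)
    rw [hrw, Finset.sum_sub_distrib, Finset.sum_const, nsmul_eq_mul, hT]
    field_simp
  have hfinal : ‖vU u - vI i‖ ^ 2 / (2 * τ) + m / τ + Real.log ((N u).card) -
        (1 / (2 * τ * (N u).card)) * ∑ j ∈ N u, ‖vU u - vI j‖ ^ 2
      ≤ Real.log (Real.exp a + S) - a := by
    have hma : (m - (1 - ‖vU u - vI i‖ ^ 2 / 2)) / τ
        = m / τ - 1 / τ + ‖vU u - vI i‖ ^ 2 / (2 * τ) := by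
      field_simp
      ring
    rw [hma] at h3
    rw [hsumcos] at h2
    linarith
  calc ‖vU u - vI i‖ ^ 2 / (2 * τ) + m / τ + Real.log ((N u).card) -
        (1 / (2 * τ * (N u).card)) * ∑ j ∈ N u, ‖vU u - vI j‖ ^ 2
      ≤ Real.log (Real.exp a + S) - a := hfinal
    _ = -Real.log (Real.exp a / (Real.exp a + S)) := hterm.symm
end

section
/- Let L_BC be the BC loss and suppose m ∈ ℝ satisfies cos(θ_ui + M_ui) ≤ ⟨v_u, v_i⟩ − m for every (u,i) ∈ O⁺, and that P_u ≠ ∅ for every user u appearing in O⁺ and P_i ≠ ∅ for every item i appearing in O⁺. With centroids c_u = (1/|P_u|)∑_{i∈P_u} v_i and c_i = (1/|P_i|)∑_{u∈P_i} v_u, one has L_BC ≥ (1/(4τ)) ∑_u |P_u| (‖v_u − c_u‖² + 1 − ‖c_u‖²) + (1/(4τ)) ∑_i |P_i| (‖v_i − c_i‖² + 1 − ‖c_i‖²) + ∑_{(u,i)∈O⁺} [ m/τ + log|N_u| − (1/(2τ|N_u|)) ∑_{j∈N_u} ‖v_u − v_j‖² ], where the user sum runs over users with P_u ≠ ∅ and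 the item sum over items with P_i ≠ ∅. -/
open Real BigOperators

-- log-sum-exp lower bound
lemma log_sum_exp_ge {α : Type*} (s : Finset α) (hs : s.Nonempty) (x : α → ℝ) :
    Real.log (s.card : ℝ) + (s.card : ℝ)⁻¹ * ∑ j ∈ s, x j ≤
      Real.log (∑ j ∈ s, Real.exp (x j)) := by
  have hn : (0:ℝ) < s.card := by exact_mod_cast Finset.card_pos.mpr hs
  set μ : ℝ := (s.card : ℝ)⁻¹ * ∑ j ∈ s, x j with hμ
  have hS : (0:ℝ) < ∑ j ∈ s, Real.exp (x j) :=
    Finset.sum_pos (fun j _ => Real.exp_pos _) hs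
  have key : (s.card : ℝ) * Real.exp μ ≤ ∑ j ∈ s, Real.exp (x j) := by
    have h1 : ∀ j ∈ s, x j - μ + 1 ≤ Real.exp (x j - μ) := fun j _ =>
      Real.add_one_le_exp _
    have h2 : (s.card : ℝ) ≤ ∑ j ∈ s, Real.exp (x j - μ) := by
      calc (s.card : ℝ) = ∑ j ∈ s, (x j - μ + 1) := by
            have hnμ : (s.card : ℝ) * μ = ∑ j ∈ s, x j := by rw [hμ]; field_simp
            rw [Finset.sum_add_distrib, Finset.sum_sub_distrib, Finset.sum_const,
              Finset.sum_const, nsmul_eq_mul, nsmul_eq_mul, mul_one, hnμ]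
            ring
        _ ≤ _ := Finset.sum_le_sum h1
    have h3 : ∑ j ∈ s, Real.exp (x j - μ) =
        Real.exp (-μ) * ∑ j ∈ s, Real.exp (x j) := by
      rw [Finset.mul_sum]
      exact Finset.sum_congr rfl fun j _ => by rw [← Real.exp_add]; ring_nf
    rw [h3] at h2
    have := mul_le_mul_of_nonneg_left h2 (le_of_lt (Real.exp_pos μ))
    calc (s.card : ℝ) * Real.exp μ ≤ Real.exp μ * (Real.exp (-μ) * ∑ j ∈ s, Real.exp (x j)) := by
          linarith [this]
      _ = ∑ j ∈ s, Real.exp (x j) := by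
          rw [← mul_assoc, ← Real.exp_add]; simp
  calc Real.log (s.card : ℝ) + μ = Real.log ((s.card : ℝ) * Real.exp μ) := by
        rw [Real.log_mul (ne_of_gt hn) (ne_of_gt (Real.exp_pos _)), Real.log_exp]
    _ ≤ Real.log (∑ j ∈ s, Real.exp (x j)) :=
        Real.log_le_log (by positivity) key

-- centroid identity
lemma centroid_sum_id {α E : Type*} [NormedAddCommGroup E] [InnerProductSpace ℝ E]
    (v : E) (hv : ‖v‖ = 1) (s : Finset α) (hs : s.Nonempty)
    (f : α → E) (hf : ∀ a ∈ s, ‖f a‖ = 1)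
    (c : E) (hc : c = ((s.card : ℝ))⁻¹ • ∑ a ∈ s, f a) :
    ∑ a ∈ s, ‖v - f a‖ ^ 2 = (s.card : ℝ) * (‖v - c‖ ^ 2 + 1 - ‖c‖ ^ 2) := by
  have hn : (0:ℝ) < s.card := by exact_mod_cast Finset.card_pos.mpr hs
  have hsum : ∑ a ∈ s, f a = (s.card : ℝ) • c := by
    rw [hc, smul_smul, mul_inv_cancel₀ (ne_of_gt hn), one_smul]
  have hL : ∑ a ∈ s, ‖v - f a‖ ^ 2 = 2 * s.card - 2 * (inner ℝ v ((s.card : ℝ) • c) : ℝ) := by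
    rw [← hsum, inner_sum]
    have : ∀ a ∈ s, ‖v - f a‖ ^ 2 = 2 - 2 * (inner ℝ v (f a) : ℝ) := fun a ha => by
      rw [norm_sub_sq_real, hv, hf a ha]; ring
    rw [Finset.sum_congr rfl this, Finset.sum_sub_distrib, Finset.sum_const,
      nsmul_eq_mul, Finset.mul_sum]
    ring
  rw [hL, inner_smul_right, norm_sub_sq_real, hv]
  ring

/-- The BC loss is bounded below by user- and item-centroid compactness
terms plus the dispersion term, up to explicit constants. -/
theorem bc_loss_centroid_lower_bound
    {U I : Type*} [Fintype U] [Fintype I] (d : ℕ)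
    (vU : U → EuclideanSpace ℝ (Fin d)) (vI : I → EuclideanSpace ℝ (Fin d))
    (hU : ∀ u, ‖vU u‖ = 1) (hI : ∀ i, ‖vI i‖ = 1)
    (Opos : Finset (U × I)) (hO : Opos.Nonempty)
    (Pu : U → Finset I) (hPu : ∀ u i, i ∈ Pu u ↔ (u, i) ∈ Opos)
    (Pi : I → Finset U) (hPi : ∀ i u, u ∈ Pi i ↔ (u, i) ∈ Opos)
    (hPune : ∀ p ∈ Opos, (Pu p.1).Nonempty)
    (hPine : ∀ p ∈ Opos, (Pi p.2).Nonempty)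
    (cU : U → EuclideanSpace ℝ (Fin d))
    (hcU : ∀ u, (Pu u).Nonempty → cU u = (((Pu u).card : ℝ))⁻¹ • ∑ i ∈ Pu u, vI i)
    (cI : I → EuclideanSpace ℝ (Fin d))
    (hcI : ∀ i, (Pi i).Nonempty → cI i = (((Pi i).card : ℝ))⁻¹ • ∑ u ∈ Pi i, vU u)
    (N : U → Finset I) (hN : ∀ p ∈ Opos, (N p.1).Nonempty)
    (τ : ℝ) (hτ : 0 < τ)
    (M : U → I → ℝ) (hM : ∀ p ∈ Opos, 0 ≤ M p.1 p.2)
    (θ : U → I → ℝ)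
    (hθ : ∀ u i, θ u i = Real.arccos ((inner ℝ (vU u) (vI i) : ℝ)))
    (m : ℝ)
    (hm : ∀ p ∈ Opos,
      Real.cos (θ p.1 p.2 + M p.1 p.2) ≤ (inner ℝ (vU p.1) (vI p.2) : ℝ) - m)
    (LBC : ℝ)
    (hLBC : LBC = -∑ p ∈ Opos, Real.log
      (Real.exp (Real.cos (θ p.1 p.2 + M p.1 p.2) / τ) /
        (Real.exp (Real.cos (θ p.1 p.2 + M p.1 p.2) / τ) +
          ∑ j ∈ N p.1, Real.exp (Real.cos (θ p.1 j) / τ)))) :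
    LBC ≥
      (1 / (4 * τ)) * ∑ u ∈ Finset.univ.filter (fun u => (Pu u).Nonempty),
        ((Pu u).card : ℝ) * (‖vU u - cU u‖ ^ 2 + 1 - ‖cU u‖ ^ 2) +
      (1 / (4 * τ)) * ∑ i ∈ Finset.univ.filter (fun i => (Pi i).Nonempty),
        ((Pi i).card : ℝ) * (‖vI i - cI i‖ ^ 2 + 1 - ‖cI i‖ ^ 2) +
      ∑ p ∈ Opos,
        (m / τ + Real.log ((N p.1).card) -
          (1 / (2 * τ * (N p.1).card)) * ∑ j ∈ N p.1, ‖vU p.1 - vI j‖ ^ 2) := by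
  have hinner : ∀ u i, (inner ℝ (vU u) (vI i) : ℝ) = 1 - ‖vU u - vI i‖ ^ 2 / 2 := by
    intro u i
    have h := norm_sub_sq_real (vU u) (vI i)
    rw [hU u, hI i] at h
    linarith
  have hcos : ∀ u i, Real.cos (θ u i) = (inner ℝ (vU u) (vI i) : ℝ) := by
    intro u i
    rw [hθ]
    have h := abs_real_inner_le_norm (vU u) (vI i)
    rw [hU u, hI i, mul_one] at h
    exact Real.cos_arccos (neg_le_of_abs_le h) (le_of_abs_le h)
  -- per-term lower bound
  have key : ∀ p ∈ Opos,
      (m / τ + Real.log ((N p.1).card) -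
          (1 / (2 * τ * (N p.1).card)) * ∑ j ∈ N p.1, ‖vU p.1 - vI j‖ ^ 2)
        + (1 / (2 * τ)) * ‖vU p.1 - vI p.2‖ ^ 2
      ≤ -Real.log
          (Real.exp (Real.cos (θ p.1 p.2 + M p.1 p.2) / τ) /
            (Real.exp (Real.cos (θ p.1 p.2 + M p.1 p.2) / τ) +
              ∑ j ∈ N p.1, Real.exp (Real.cos (θ p.1 j) / τ))) := by
    intro p hp
    set a := Real.cos (θ p.1 p.2 + M p.1 p.2) / τ with ha
    set S := ∑ j ∈ N p.1, Real.exp (Real.cos (θ p.1 j) / τ) with hSdef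
    have hNp := hN p hp
    have hn : (0:ℝ) < ((N p.1).card : ℝ) := by exact_mod_cast Finset.card_pos.mpr hNp
    have hS : 0 < S := Finset.sum_pos (fun j _ => Real.exp_pos _) hNp
    have hlog : -Real.log (Real.exp a / (Real.exp a + S))
        = Real.log (Real.exp a + S) - a := by
      rw [Real.log_div (Real.exp_ne_zero a) (by positivity), Real.log_exp]
      ring
    rw [hlog]
    have h1 : Real.log S ≤ Real.log (Real.exp a + S) :=
      Real.log_le_log hS (by linarith [Real.exp_pos a])
    have h2 : Real.log ((N p.1).card : ℝ)
        + ((N p.1).card : ℝ)⁻¹ * ∑ j ∈ N p.1, Real.cos (θ p.1 j) / τ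
        ≤ Real.log S := log_sum_exp_ge _ hNp _
    have h4 : ((N p.1).card : ℝ)⁻¹ * ∑ j ∈ N p.1, Real.cos (θ p.1 j) / τ
        = 1 / τ - (1 / (2 * τ * (N p.1).card)) * ∑ j ∈ N p.1, ‖vU p.1 - vI j‖ ^ 2 := by
      have hterm : ∀ j ∈ N p.1, Real.cos (θ p.1 j) / τ
          = 1 / τ - ‖vU p.1 - vI j‖ ^ 2 * (1 / (2 * τ)) := by
        intro j _
        rw [hcos, hinner]
        ring
      rw [Finset.sum_congr rfl hterm, Finset.sum_sub_distrib, Finset.sum_const,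
        nsmul_eq_mul, ← Finset.sum_mul]
      field_simp
    rw [h4] at h2
    have h3 : a ≤ 1 / τ - ‖vU p.1 - vI p.2‖ ^ 2 / (2 * τ) - m / τ := by
      have h := hm p hp
      rw [hinner] at h
      calc a ≤ (1 - ‖vU p.1 - vI p.2‖ ^ 2 / 2 - m) / τ := by
            rw [ha]
            gcongr
        _ = 1 / τ - ‖vU p.1 - vI p.2‖ ^ 2 / (2 * τ) - m / τ := by ring
    have hexpand : (1 / (2 * τ)) * ‖vU p.1 - vI p.2‖ ^ 2
        = ‖vU p.1 - vI p.2‖ ^ 2 / (2 * τ) := by ring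
    linarith [h1, h2, h3]
  -- sum the per-term bounds
  have hsum : ∑ p ∈ Opos,
      ((m / τ + Real.log ((N p.1).card) -
          (1 / (2 * τ * (N p.1).card)) * ∑ j ∈ N p.1, ‖vU p.1 - vI j‖ ^ 2)
        + (1 / (2 * τ)) * ‖vU p.1 - vI p.2‖ ^ 2) ≤ LBC := by
    rw [hLBC, ← Finset.sum_neg_distrib]
    exact Finset.sum_le_sum key
  rw [Finset.sum_add_distrib, ← Finset.mul_sum] at hsum
  -- centroid identities
  have huser : ∑ p ∈ Opos, ‖vU p.1 - vI p.2‖ ^ 2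
      = ∑ u ∈ Finset.univ.filter (fun u => (Pu u).Nonempty),
          ((Pu u).card : ℝ) * (‖vU u - cU u‖ ^ 2 + 1 - ‖cU u‖ ^ 2) := by
    rw [Finset.sum_finset_product' Opos Finset.univ Pu
      (fun p => by simp [hPu p.1 p.2]) (f := fun u i => ‖vU u - vI i‖ ^ 2)]
    have h0 : ∀ u ∈ Finset.univ, u ∉ Finset.univ.filter (fun u => (Pu u).Nonempty) →
        ∑ i ∈ Pu u, ‖vU u - vI i‖ ^ 2 = 0 := by
      intro u _ hu
      simp only [Finset.mem_filter, Finset.mem_univ, true_and] at hu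
      rw [Finset.not_nonempty_iff_eq_empty.mp hu, Finset.sum_empty]
    rw [← Finset.sum_subset (Finset.filter_subset _ Finset.univ) h0]
    refine Finset.sum_congr rfl fun u hu => ?_
    have hune : (Pu u).Nonempty := (Finset.mem_filter.mp hu).2
    exact centroid_sum_id (vU u) (hU u) (Pu u) hune vI (fun i _ => hI i) (cU u) (hcU u hune)
  have hitem : ∑ p ∈ Opos, ‖vU p.1 - vI p.2‖ ^ 2
      = ∑ i ∈ Finset.univ.filter (fun i => (Pi i).Nonempty),
          ((Pi i).card : ℝ) * (‖vI i - cI i‖ ^ 2 + 1 - ‖cI i‖ ^ 2) := by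
    rw [Finset.sum_finset_product_right' Opos Finset.univ Pi
      (fun p => by simp [hPi p.2 p.1]) (f := fun u i => ‖vU u - vI i‖ ^ 2)]
    have h0 : ∀ i ∈ Finset.univ, i ∉ Finset.univ.filter (fun i => (Pi i).Nonempty) →
        ∑ u ∈ Pi i, ‖vU u - vI i‖ ^ 2 = 0 := by
      intro i _ hi
      simp only [Finset.mem_filter, Finset.mem_univ, true_and] at hi
      rw [Finset.not_nonempty_iff_eq_empty.mp hi, Finset.sum_empty]
    rw [← Finset.sum_subset (Finset.filter_subset _ Finset.univ) h0]
    refine Finset.sum_congr rfl fun i hi => ?_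
    have hine : (Pi i).Nonempty := (Finset.mem_filter.mp hi).2
    have := centroid_sum_id (vI i) (hI i) (Pi i) hine vU (fun u _ => hU u) (cI i) (hcI i hine)
    rw [← this]
    exact Finset.sum_congr rfl fun u _ => by rw [norm_sub_rev]
  have hsplit : (1 / (2 * τ)) * ∑ p ∈ Opos, ‖vU p.1 - vI p.2‖ ^ 2
      = (1 / (4 * τ)) * ∑ p ∈ Opos, ‖vU p.1 - vI p.2‖ ^ 2
        + (1 / (4 * τ)) * ∑ p ∈ Opos, ‖vU p.1 - vI p.2‖ ^ 2 := by ring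
  rw [hsplit] at hsum
  nth_rewrite 1 [huser] at hsum
  nth_rewrite 1 [hitem] at hsum
  linarith [hsum]
end

section
/- If the margins satisfy 0 ≤ M_ui ≤ π − θ_ui for every (u,i) ∈ O⁺, then the BC loss dominates the sampled softmax loss: L_BC ≥ L₀. -/
open Real BigOperators

/-- If the margins satisfy `0 ≤ M_ui ≤ π − θ_ui` for every `(u,i) ∈ O⁺`,
then the BC loss dominates the sampled softmax loss: `L_BC ≥ L₀`. -/
theorem bc_loss_ge_softmax_loss
    {U I : Type*} (d : ℕ)
    (vU : U → EuclideanSpace ℝ (Fin d)) (vI : I → EuclideanSpace ℝ (Fin d))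
    (hU : ∀ u, ‖vU u‖ = 1) (hI : ∀ i, ‖vI i‖ = 1)
    (Opos : Finset (U × I)) (hO : Opos.Nonempty)
    (N : U → Finset I) (hN : ∀ p ∈ Opos, (N p.1).Nonempty)
    (τ : ℝ) (hτ : 0 < τ)
    (θ : U → I → ℝ)
    (hθ : ∀ u i, θ u i = Real.arccos ((inner ℝ (vU u) (vI i) : ℝ)))
    (M : U → I → ℝ)
    (hM : ∀ p ∈ Opos, 0 ≤ M p.1 p.2 ∧ M p.1 p.2 ≤ π - θ p.1 p.2)
    (L0 LBC : ℝ)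
    (hL0 : L0 = -∑ p ∈ Opos, Real.log
      (Real.exp (Real.cos (θ p.1 p.2) / τ) /
        (Real.exp (Real.cos (θ p.1 p.2) / τ) +
          ∑ j ∈ N p.1, Real.exp (Real.cos (θ p.1 j) / τ))))
    (hLBC : LBC = -∑ p ∈ Opos, Real.log
      (Real.exp (Real.cos (θ p.1 p.2 + M p.1 p.2) / τ) /
        (Real.exp (Real.cos (θ p.1 p.2 + M p.1 p.2) / τ) +
          ∑ j ∈ N p.1, Real.exp (Real.cos (θ p.1 j) / τ)))) :
    LBC ≥ L0 := by
  subst hL0 hLBC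
  rw [ge_iff_le, neg_le_neg_iff]
  apply Finset.sum_le_sum
  intro p hp
  set S := ∑ j ∈ N p.1, Real.exp (Real.cos (θ p.1 j) / τ) with hS
  have hSpos : 0 < S := Finset.sum_pos (fun j _ => Real.exp_pos _) (hN p hp)
  have hθmem : θ p.1 p.2 ∈ Set.Icc 0 π := by
    rw [hθ]; exact ⟨Real.arccos_nonneg _, Real.arccos_le_pi _⟩
  obtain ⟨hM0, hMle⟩ := hM p hp
  have hcos : Real.cos (θ p.1 p.2 + M p.1 p.2) ≤ Real.cos (θ p.1 p.2) := by
    apply Real.cos_le_cos_of_nonneg_of_le_pi hθmem.1 (by linarith)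
    linarith
  have hexp : Real.exp (Real.cos (θ p.1 p.2 + M p.1 p.2) / τ) ≤
      Real.exp (Real.cos (θ p.1 p.2) / τ) := by
    gcongr
  set a := Real.exp (Real.cos (θ p.1 p.2 + M p.1 p.2) / τ)
  set b := Real.exp (Real.cos (θ p.1 p.2) / τ)
  have ha : 0 < a := Real.exp_pos _
  have hb : 0 < b := Real.exp_pos _
  apply Real.log_le_log (by positivity)
  rw [div_le_div_iff₀ (by positivity) (by positivity)]
  nlinarith
end

section
/- Let O⁺ ⊆ U × I be a finite set of user–item pairs with unit vectors v_u, v_i ∈ ℝ^d, and for u ∈ U with P_u = {i : (u,i) ∈ O⁺} ≠ ∅ let c_u = (1/|P_u|)∑_{i∈P_u} v_i, and for i ∈ I with P_i = {u : (u,i) ∈ O⁺} ≠ ∅ let c_i = (1/|P_i|)∑_{u∈P_i} v_u. Then ∑_{(u,i)∈O⁺} ‖v_u − v_i‖² = (1/2) ∑_{u : P_u ≠ ∅} |P_u| ( ‖v_u − c_u‖² + 1 − ‖c_u‖² ) + (1/2) ∑_{i : P_i ≠ ∅} |P_i| ( ‖v_i − c_i‖² + 1 − ‖c_i‖² ); that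 is, the total squared distance over positive interactions decomposes symmetrically into a user-centroid compactness term and an item-centroid compactness term. -/
open Real BigOperators

lemma centroid_compactness_aux {d : ℕ} {α : Type*} (s : Finset α) (hs : s.Nonempty)
    (v : EuclideanSpace ℝ (Fin d)) (hv : ‖v‖ = 1)
    (w : α → EuclideanSpace ℝ (Fin d)) (hw : ∀ a ∈ s, ‖w a‖ = 1)
    (c : EuclideanSpace ℝ (Fin d)) (hc : c = ((s.card : ℝ))⁻¹ • ∑ a ∈ s, w a) :
    (s.card : ℝ) * (‖v - c‖ ^ 2 + 1 - ‖c‖ ^ 2) = ∑ a ∈ s, ‖v - w a‖ ^ 2 := by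
  have hn : (s.card : ℝ) ≠ 0 := by
    exact_mod_cast (Finset.card_pos.mpr hs).ne'
  have hvc : (s.card : ℝ) * (inner ℝ v c : ℝ) = ∑ a ∈ s, (inner ℝ v (w a) : ℝ) := by
    rw [hc, real_inner_smul_right, inner_sum]
    field_simp
  have key : ∀ a ∈ s, ‖v - w a‖ ^ 2 = 2 - 2 * (inner ℝ v (w a) : ℝ) := by
    intro a ha
    rw [norm_sub_sq_real, hv, hw a ha]; ring
  rw [Finset.sum_congr rfl key, norm_sub_sq_real, hv]
  rw [Finset.sum_sub_distrib, Finset.sum_const, ← Finset.mul_sum, ← hvc]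
  ring

/-- The total squared distance over positive interactions decomposes
symmetrically into a user-centroid compactness term and an item-centroid
compactness term. -/
theorem sum_sq_dist_symmetric_centroid_decomposition
    {U I : Type*} [Fintype U] [Fintype I] (d : ℕ)
    (vU : U → EuclideanSpace ℝ (Fin d)) (vI : I → EuclideanSpace ℝ (Fin d))
    (hU : ∀ u, ‖vU u‖ = 1) (hI : ∀ i, ‖vI i‖ = 1)
    (Opos : Finset (U × I))
    (Pu : U → Finset I) (hPu : ∀ u i, i ∈ Pu u ↔ (u, i) ∈ Opos)
    (Pi : I → Finset U) (hPi : ∀ i u, u ∈ Pi i ↔ (u, i) ∈ Opos)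
    (cU : U → EuclideanSpace ℝ (Fin d))
    (hcU : ∀ u, (Pu u).Nonempty → cU u = (((Pu u).card : ℝ))⁻¹ • ∑ i ∈ Pu u, vI i)
    (cI : I → EuclideanSpace ℝ (Fin d))
    (hcI : ∀ i, (Pi i).Nonempty → cI i = (((Pi i).card : ℝ))⁻¹ • ∑ u ∈ Pi i, vU u) :
    ∑ p ∈ Opos, ‖vU p.1 - vI p.2‖ ^ 2 =
      (1 / 2) * ∑ u ∈ Finset.univ.filter (fun u => (Pu u).Nonempty),
        ((Pu u).card : ℝ) * (‖vU u - cU u‖ ^ 2 + 1 - ‖cU u‖ ^ 2) +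
      (1 / 2) * ∑ i ∈ Finset.univ.filter (fun i => (Pi i).Nonempty),
        ((Pi i).card : ℝ) * (‖vI i - cI i‖ ^ 2 + 1 - ‖cI i‖ ^ 2) := by
  have hmemU : ∀ p : U × I, p ∈ Opos ↔
      p.1 ∈ Finset.univ.filter (fun u => (Pu u).Nonempty) ∧ p.2 ∈ Pu p.1 := by
    intro p
    simp only [Finset.mem_filter, Finset.mem_univ, true_and]
    constructor
    · intro h; exact ⟨⟨p.2, (hPu p.1 p.2).mpr h⟩, (hPu p.1 p.2).mpr h⟩
    · intro h; exact (hPu p.1 p.2).mp h.2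
  have hmemI : ∀ p : U × I, p ∈ Opos ↔
      p.2 ∈ Finset.univ.filter (fun i => (Pi i).Nonempty) ∧ p.1 ∈ Pi p.2 := by
    intro p
    simp only [Finset.mem_filter, Finset.mem_univ, true_and]
    constructor
    · intro h; exact ⟨⟨p.1, (hPi p.2 p.1).mpr h⟩, (hPi p.2 p.1).mpr h⟩
    · intro h; exact (hPi p.2 p.1).mp h.2
  have h1 : ∑ p ∈ Opos, ‖vU p.1 - vI p.2‖ ^ 2 =
      ∑ u ∈ Finset.univ.filter (fun u => (Pu u).Nonempty),
        ((Pu u).card : ℝ) * (‖vU u - cU u‖ ^ 2 + 1 - ‖cU u‖ ^ 2) := by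
    rw [Finset.sum_finset_product Opos _ _ hmemU]
    refine Finset.sum_congr rfl fun u hu => ?_
    have hne : (Pu u).Nonempty := (Finset.mem_filter.mp hu).2
    exact (centroid_compactness_aux (Pu u) hne (vU u) (hU u) vI
      (fun a _ => hI a) (cU u) (hcU u hne)).symm
  have h2 : ∑ p ∈ Opos, ‖vU p.1 - vI p.2‖ ^ 2 =
      ∑ i ∈ Finset.univ.filter (fun i => (Pi i).Nonempty),
        ((Pi i).card : ℝ) * (‖vI i - cI i‖ ^ 2 + 1 - ‖cI i‖ ^ 2) := by
    rw [Finset.sum_finset_product_right Opos _ _ hmemI]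
    refine Finset.sum_congr rfl fun i hi => ?_
    have hne : (Pi i).Nonempty := (Finset.mem_filter.mp hi).2
    have := centroid_compactness_aux (Pi i) hne (vI i) (hI i) vU
      (fun a _ => hU a) (cI i) (hcI i hne)
    rw [this]
    exact Finset.sum_congr rfl fun a _ => by simp [norm_sub_rev]
  rw [← h1, ← h2]; ring
end

section
/- Let O⁺ be a finite set of user–item pairs with unit vectors v_u, v_j ∈ ℝ^d, each user u appearing in O⁺ having a finite nonempty negative set N_u, and τ > 0. Then for any choice of real numbers A_ui, ∑_{(u,i)∈O⁺} log( exp(A_ui) + ∑_{j∈N_u} exp(⟨v_u, v_j⟩/τ) ) ≥ ∑_{(u,i)∈O⁺} [ log|N_u| + 1/τ − (1/(2τ|N_u|)) ∑_{j∈N_u} ‖v_u − v_j‖² ]; that is, the log-partition term of the BC loss is bounded below, up to explicit constants, by the negative of the average squared distances between each user and its negative items (the dispersion term). -/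
open Real BigOperators

lemma jensen_exp_card {ι : Type*} (s : Finset ι) (hs : s.Nonempty) (f : ι → ℝ) :
    (s.card : ℝ) * Real.exp ((∑ i ∈ s, f i) / s.card) ≤ ∑ i ∈ s, Real.exp (f i) := by
  have hc : (0:ℝ) < s.card := by exact_mod_cast Finset.card_pos.2 hs
  have h := convexOn_exp.map_sum_le (w := fun _ : ι => (s.card : ℝ)⁻¹)
    (p := f) (t := s) (fun i _ => by positivity)
    (by rw [Finset.sum_const, nsmul_eq_mul]; field_simp) (fun i _ => Set.mem_univ _)
  simp only [smul_eq_mul, ← Finset.mul_sum] at h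
  rw [div_eq_inv_mul]
  calc (s.card : ℝ) * Real.exp ((s.card:ℝ)⁻¹ * ∑ i ∈ s, f i)
      ≤ (s.card : ℝ) * ((s.card:ℝ)⁻¹ * ∑ i ∈ s, Real.exp (f i)) :=
        mul_le_mul_of_nonneg_left h hc.le
    _ = ∑ i ∈ s, Real.exp (f i) := by field_simp

/-- The log-partition term of the BC loss is bounded below, up to
explicit constants, by the negative of the average squared distances between each
user and its negative items (the dispersion term). -/
theorem log_partition_lower_bound
    {U I : Type*} (d : ℕ)
    (vU : U → EuclideanSpace ℝ (Fin d)) (vI : I → EuclideanSpace ℝ (Fin d))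
    (hU : ∀ u, ‖vU u‖ = 1) (hI : ∀ i, ‖vI i‖ = 1)
    (Opos : Finset (U × I))
    (N : U → Finset I) (hN : ∀ p ∈ Opos, (N p.1).Nonempty)
    (τ : ℝ) (hτ : 0 < τ)
    (A : U → I → ℝ) :
    ∑ p ∈ Opos, Real.log
      (Real.exp (A p.1 p.2) +
        ∑ j ∈ N p.1, Real.exp ((inner ℝ (vU p.1) (vI j) : ℝ) / τ)) ≥
    ∑ p ∈ Opos,
      (Real.log ((N p.1).card) + 1 / τ -
        (1 / (2 * τ * (N p.1).card)) * ∑ j ∈ N p.1, ‖vU p.1 - vI j‖ ^ 2) := by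
  apply Finset.sum_le_sum
  intro p hp
  set u := p.1
  have hne : (N u).Nonempty := hN p hp
  have hc : (0:ℝ) < (N u).card := by exact_mod_cast Finset.card_pos.2 hne
  -- rewrite inner in terms of norms
  have hinner : ∀ j, ((inner ℝ (vU u) (vI j) : ℝ)) / τ = 1/τ - ‖vU u - vI j‖^2 / (2*τ) := by
    intro j
    have h := norm_sub_sq_real (vU u) (vI j)
    rw [hU, hI] at h
    have : (inner ℝ (vU u) (vI j) : ℝ) = 1 - ‖vU u - vI j‖^2 / 2 := by nlinarith
    rw [this]; field_simp
  have hS : ∑ j ∈ N u, Real.exp ((inner ℝ (vU u) (vI j) : ℝ) / τ)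
      = ∑ j ∈ N u, Real.exp (1/τ - ‖vU u - vI j‖^2 / (2*τ)) := by
    exact Finset.sum_congr rfl fun j _ => by rw [hinner j]
  have hJ := jensen_exp_card (N u) hne (fun j => 1/τ - ‖vU u - vI j‖^2 / (2*τ))
  have hmean : (∑ j ∈ N u, (1/τ - ‖vU u - vI j‖^2 / (2*τ))) / (N u).card
      = 1/τ - (1 / (2 * τ * (N u).card)) * ∑ j ∈ N u, ‖vU u - vI j‖^2 := by
    rw [Finset.sum_sub_distrib, Finset.sum_const, nsmul_eq_mul, ← Finset.sum_div]
    field_simp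
  have hpos : (0:ℝ) < ∑ j ∈ N u, Real.exp ((inner ℝ (vU u) (vI j) : ℝ) / τ) :=
    Finset.sum_pos (fun j _ => Real.exp_pos _) hne
  have h1 : Real.log ((N u).card) + 1 / τ -
      (1 / (2 * τ * (N u).card)) * ∑ j ∈ N u, ‖vU u - vI j‖ ^ 2
      = Real.log ((N u).card * Real.exp ((∑ j ∈ N u, (1/τ - ‖vU u - vI j‖^2 / (2*τ))) / (N u).card)) := by
    rw [Real.log_mul hc.ne' (Real.exp_pos _).ne', Real.log_exp, hmean]
    ring
  rw [h1]
  have h2 : Real.log ((N u).card * Real.exp ((∑ j ∈ N u, (1/τ - ‖vU u - vI j‖^2 / (2*τ))) / (N u).card))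
      ≤ Real.log (∑ j ∈ N u, Real.exp ((inner ℝ (vU u) (vI j) : ℝ) / τ)) := by
    apply Real.log_le_log (by positivity)
    rw [hS]; exact hJ
  refine h2.trans (Real.log_le_log hpos ?_)
  linarith [Real.exp_pos (A u p.2)]
end
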